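/- Let K₁ ⊆ ℂ be the splitting field over ℚ of χ₁ = X⁴ − 2X³ − 30X² − 2X + 1. Then the intermediate fields of the extension K₁/ℚ that have degree 2 over ℚ are exactly the three fields ℚ(√3), ℚ(√11) and ℚ(√33). -/

import Mathlib

open Polynomial IntermediateField

noncomputable section




private def cA : ℂ := ((Real.sqrt 33 : ℝ) : ℂ)
private def cS : ℂ := ((Real.sqrt (30 + 2 * Real.sqrt 33) : ℝ) : ℂ)
private def cW : ℂ := ((Real.sqrt (30 - 2 * Real.sqrt 33) : ℝ) : ℂ)
private def cT : ℂ := ((Real.sqrt 3 : ℝ) : ℂ)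
private def cE : ℂ := ((Real.sqrt 11 : ℝ) : ℂ)

private lemma sqrt33_le : Real.sqrt 33 ≤ 6 := by
  rw [show (33:ℝ) = 33 by norm_num]
  nlinarith [Real.sq_sqrt (show (0:ℝ) ≤ 33 by norm_num), Real.sqrt_nonneg (33:ℝ)]

private lemma hA : cA ^ 2 = 33 := by
  rw [cA, ← Complex.ofReal_pow, Real.sq_sqrt (by norm_num : (0:ℝ) ≤ 33)]; norm_num

private lemma hS : cS ^ 2 = 30 + 2 * cA := by
  rw [cS, cA, ← Complex.ofReal_pow,
    Real.sq_sqrt (by positivity : (0:ℝ) ≤ 30 + 2 * Real.sqrt 33)]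
  push_cast; ring

private lemma hW : cW ^ 2 = 30 - 2 * cA := by
  rw [cW, cA, ← Complex.ofReal_pow,
    Real.sq_sqrt (by nlinarith [sqrt33_le] : (0:ℝ) ≤ 30 - 2 * Real.sqrt 33)]
  push_cast; ring

private lemma hT : cT ^ 2 = 3 := by
  rw [cT, ← Complex.ofReal_pow, Real.sq_sqrt (by norm_num : (0:ℝ) ≤ 3)]; norm_num

private lemma hE : cE ^ 2 = 11 := by
  rw [cE, ← Complex.ofReal_pow, Real.sq_sqrt (by norm_num : (0:ℝ) ≤ 11)]; norm_num

private lemma hSW : cS * cW = 16 * cT := by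
  rw [cS, cW, cT, ← Complex.ofReal_mul,
    ← Real.sqrt_mul (by positivity : (0:ℝ) ≤ 30 + 2 * Real.sqrt 33)]
  have h1 : (30 + 2 * Real.sqrt 33) * (30 - 2 * Real.sqrt 33) = 768 := by
    nlinarith [Real.sq_sqrt (show (0:ℝ) ≤ 33 by norm_num)]
  rw [h1, show (768:ℝ) = 16 ^ 2 * 3 by norm_num, Real.sqrt_mul (by positivity),
    Real.sqrt_sq (by norm_num : (0:ℝ) ≤ 16)]
  push_cast; ring

private lemma hAT : cA * cT = 3 * cE := by
  rw [cA, cT, cE, ← Complex.ofReal_mul, ← Real.sqrt_mul (by norm_num : (0:ℝ) ≤ 33)]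
  rw [show (33:ℝ) * 3 = 3 ^ 2 * 11 by norm_num, Real.sqrt_mul (by positivity),
    Real.sqrt_sq (by norm_num : (0:ℝ) ≤ 3)]
  push_cast; ring

private lemma hSpos : cS ≠ 0 := by
  rw [cS, Ne, Complex.ofReal_eq_zero]
  positivity

-- rational nonsquare facts
private lemma ratns (n : ℕ) (hi : ∀ m : ℤ, m ^ 2 ≠ (n:ℤ)) : ∀ q : ℚ, q ^ 2 ≠ (n:ℚ) := by
  intro q hq
  have hx : ((q:ℝ)) ^ 2 = ((n:ℤ):ℝ) := by push_cast; exact_mod_cast congrArg (fun r : ℚ => (r:ℝ)) hq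
  have : Irrational (q:ℝ) := by
    refine irrational_nrt_of_notint_nrt 2 n hx ?_ (by norm_num)
    rintro ⟨y, hy⟩
    refine hi y ?_
    rw [hy] at hx; exact_mod_cast hx
  exact (Rat.not_irrational q) this

private lemma intns_aux (n : ℕ) (k : ℕ) (h1 : k * k < n) (h2 : n < (k+1)*(k+1)) :
    ∀ m : ℤ, m ^ 2 ≠ (n:ℤ) := by
  intro m hm
  have h3 : m.natAbs * m.natAbs = n := by
    have : ((m.natAbs * m.natAbs : ℕ) : ℤ) = (n:ℤ) := by
      push_cast [Int.natAbs_mul_self]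
      rw [abs_mul_abs_self]; nlinarith [hm]
    exact_mod_cast this
  rcases Nat.lt_or_ge m.natAbs (k+1) with h | h
  · have h4 : m.natAbs ≤ k := by omega
    nlinarith [Nat.mul_le_mul h4 h4]
  · nlinarith [Nat.mul_le_mul h h]

private lemma ns3 : ∀ q : ℚ, q ^ 2 ≠ 3 := by
  have := ratns 3 (intns_aux 3 1 (by norm_num) (by norm_num)); exact_mod_cast this
private lemma ns11 : ∀ q : ℚ, q ^ 2 ≠ 11 := by
  have := ratns 11 (intns_aux 11 3 (by norm_num) (by norm_num)); exact_mod_cast this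
private lemma ns33 : ∀ q : ℚ, q ^ 2 ≠ 33 := by
  have := ratns 33 (intns_aux 33 5 (by norm_num) (by norm_num)); exact_mod_cast this
private lemma ns192 : ∀ q : ℚ, q ^ 2 ≠ 192 := by
  have := ratns 192 (intns_aux 192 13 (by norm_num) (by norm_num)); exact_mod_cast this
private lemma ns768 : ∀ q : ℚ, q ^ 2 ≠ 768 := by
  have := ratns 768 (intns_aux 768 27 (by norm_num) (by norm_num)); exact_mod_cast this


private lemma quad_mem (F : IntermediateField ℚ ℂ) (α : ℂ) (h2 : α ^ 2 ∈ F) (hα : α ∉ F) :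
    ∀ z ∈ IntermediateField.adjoin ℚ (insert α (F : Set ℂ)),
      ∃ x ∈ F, ∃ y ∈ F, z = x + y * α := by
  have inv_mem : ∀ z ∈ {z : ℂ | ∃ x ∈ F, ∃ y ∈ F, z = x + y * α},
      z⁻¹ ∈ {z : ℂ | ∃ x ∈ F, ∃ y ∈ F, z = x + y * α} := by
    rintro z ⟨x, hx, y, hy, rfl⟩
    by_cases hz : x + y * α = 0
    · exact ⟨0, F.zero_mem, 0, F.zero_mem, by rw [hz]; simp⟩
    have hd : x ^ 2 - y ^ 2 * α ^ 2 ≠ 0 := by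
      intro h
      by_cases hy0 : y = 0
      · subst hy0
        have : x = 0 := by
          have : x ^ 2 = 0 := by linear_combination h
          exact pow_eq_zero_iff (n := 2) (by norm_num) |>.mp this
        exact hz (by rw [this]; ring)
      · have : (α - x / y) * (α + x / y) = 0 := by
          field_simp
          linear_combination -h
        rcases mul_eq_zero.mp this with h' | h'
        · exact hα (by rw [sub_eq_zero.mp h']; exact F.div_mem hx hy)
        · have : α = -(x / y) := by linear_combination h'
          exact hα (by rw [this]; exact F.neg_mem (F.div_mem hx hy))
    have hdF : x ^ 2 - y ^ 2 * α ^ 2 ∈ F :=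
      F.sub_mem (pow_mem hx 2) (mul_mem (pow_mem hy 2) h2)
    have hinv : (x + y * α)⁻¹ = x * (x ^ 2 - y ^ 2 * α ^ 2)⁻¹ +
        (-(y * (x ^ 2 - y ^ 2 * α ^ 2)⁻¹)) * α := by
      refine inv_eq_of_mul_eq_one_right ?_
      field_simp
      ring
    exact ⟨x * (x ^ 2 - y ^ 2 * α ^ 2)⁻¹, F.mul_mem hx (F.inv_mem hdF),
      -(y * (x ^ 2 - y ^ 2 * α ^ 2)⁻¹), F.neg_mem (F.mul_mem hy (F.inv_mem hdF)), hinv⟩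
  set R : IntermediateField ℚ ℂ := Subalgebra.toIntermediateField
      { carrier := {z : ℂ | ∃ x ∈ F, ∃ y ∈ F, z = x + y * α}
        mul_mem' := by
          rintro a b ⟨x1, hx1, y1, hy1, rfl⟩ ⟨x2, hx2, y2, hy2, rfl⟩
          exact ⟨x1 * x2 + y1 * y2 * α ^ 2,
            add_mem (mul_mem hx1 hx2) (mul_mem (mul_mem hy1 hy2) h2),
            x1 * y2 + y1 * x2, add_mem (mul_mem hx1 hy2) (mul_mem hy1 hx2), by ring⟩
        one_mem' := ⟨1, F.one_mem, 0, F.zero_mem, by ring⟩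
        add_mem' := by
          rintro a b ⟨x1, hx1, y1, hy1, rfl⟩ ⟨x2, hx2, y2, hy2, rfl⟩
          exact ⟨x1 + x2, add_mem hx1 hx2, y1 + y2, add_mem hy1 hy2, by ring⟩
        zero_mem' := ⟨0, F.zero_mem, 0, F.zero_mem, by ring⟩
        algebraMap_mem' := fun q =>
          ⟨algebraMap ℚ ℂ q, F.algebraMap_mem q, 0, F.zero_mem, by ring⟩ } inv_mem
  intro z hz
  have hle : IntermediateField.adjoin ℚ (insert α (F : Set ℂ)) ≤ R := by
    rw [IntermediateField.adjoin_le_iff]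
    rintro w (rfl | hw)
    · exact ⟨0, F.zero_mem, 1, F.one_mem, by ring⟩
    · exact ⟨w, hw, 0, F.zero_mem, by ring⟩
  exact hle hz

private lemma ratmem (F : IntermediateField ℚ ℂ) (q : ℚ) : ((q : ℚ) : ℂ) ∈ F :=
  (eq_ratCast (algebraMap ℚ ℂ) q) ▸ F.algebraMap_mem q

private lemma extract (F : IntermediateField ℚ ℂ) (α : ℂ) (hα : α ∉ F)
    {x y c : ℂ} (hx : x ∈ F) (hy : y ∈ F) (hc : c ∈ F) (h : x + y * α = c) :
    y = 0 ∧ x = c := by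
  by_cases hy0 : y = 0
  · exact ⟨hy0, by rw [hy0] at h; linear_combination h⟩
  · exfalso
    apply hα
    have : α = (c - x) * y⁻¹ := by field_simp; linear_combination h
    rw [this]
    exact F.mul_mem (F.sub_mem hc hx) (F.inv_mem hy)


private lemma ratext {a b c d : ℚ} (h : (a : ℂ) + b * cA = c + d * cA) : a = c ∧ b = d := by
  by_cases hbd : b = d
  · subst hbd
    refine ⟨?_, rfl⟩
    have : (a : ℂ) = c := by linear_combination h
    exact_mod_cast this
  · exfalso
    have hδ : (d : ℂ) - b ≠ 0 := by
      intro h'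
      apply hbd
      have : (b : ℂ) = d := by linear_combination -h'
      exact_mod_cast this
    apply ns33 ((a - c) / (d - b))
    have h2 : (((a - c) / (d - b) : ℚ) : ℂ) = cA := by
      push_cast
      rw [div_eq_iff hδ]
      linear_combination h
    have : (((a - c) / (d - b) : ℚ) : ℂ) ^ 2 = ((33 : ℚ) : ℂ) := by
      rw [h2, hA]; norm_num
    exact_mod_cast this

noncomputable def Q33 : IntermediateField ℚ ℂ := IntermediateField.adjoin ℚ {cA}
noncomputable def NN : IntermediateField ℚ ℂ := IntermediateField.adjoin ℚ {cA, cS}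
noncomputable def KK : IntermediateField ℚ ℂ := IntermediateField.adjoin ℚ {cA, cS, cT}

private lemma cA_mem_Q33 : cA ∈ Q33 := IntermediateField.subset_adjoin ℚ {cA} rfl

private lemma cA_not_bot : cA ∉ (⊥ : IntermediateField ℚ ℂ) := by
  rw [IntermediateField.mem_bot]
  rintro ⟨q, hq⟩
  rw [eq_ratCast (algebraMap ℚ ℂ) q] at hq
  apply ns33 q
  have : ((q : ℚ) : ℂ) ^ 2 = ((33 : ℚ) : ℂ) := by rw [hq, hA]; norm_num
  exact_mod_cast this

private lemma memQ33 {z : ℂ} (hz : z ∈ Q33) : ∃ c d : ℚ, z = (c : ℂ) + d * cA := by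
  have h2 : cA ^ 2 ∈ (⊥ : IntermediateField ℚ ℂ) := by rw [hA]; exact_mod_cast ratmem _ 33
  have hle : Q33 ≤ IntermediateField.adjoin ℚ (insert cA ((⊥ : IntermediateField ℚ ℂ) : Set ℂ)) :=
    IntermediateField.adjoin.mono _ _ _ (by intro w hw; rw [hw]; exact Set.mem_insert _ _)
  obtain ⟨x, hx, y, hy, rfl⟩ := quad_mem ⊥ cA h2 cA_not_bot z (hle hz)
  rw [IntermediateField.mem_bot] at hx hy
  obtain ⟨c, rfl⟩ := hx
  obtain ⟨d, rfl⟩ := hy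
  exact ⟨c, d, by rw [eq_ratCast (algebraMap ℚ ℂ) c, eq_ratCast (algebraMap ℚ ℂ) d]⟩

private lemma sq_expand (c d : ℚ) : ((c : ℂ) + d * cA) ^ 2 =
    ((c ^ 2 + 33 * d ^ 2 : ℚ) : ℂ) + ((2 * c * d : ℚ) : ℂ) * cA := by
  push_cast
  linear_combination (d : ℂ) ^ 2 * hA

/-- classification of square roots of rationals in Q33 -/
private lemma keyQ {x : ℂ} (hx : x ∈ Q33) (D : ℚ) (h : x ^ 2 = (D : ℂ)) :
    (∃ c : ℚ, x = (c : ℂ)) ∨ (∃ c : ℚ, x = (c : ℂ) * cA) := by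
  obtain ⟨c, d, rfl⟩ := memQ33 hx
  rw [sq_expand] at h
  have h3 : ((c ^ 2 + 33 * d ^ 2 : ℚ) : ℂ) + ((2 * c * d : ℚ) : ℂ) * cA
      = ((D : ℚ) : ℂ) + ((0 : ℚ) : ℂ) * cA := by rw [h]; push_cast; ring
  obtain ⟨f1, f2⟩ := ratext h3
  have : c = 0 ∨ d = 0 := by
    rcases mul_eq_zero.mp f2 with h' | h'
    · rcases mul_eq_zero.mp h' with h'' | h''
      · norm_num at h''
      · exact Or.inl h''
    · exact Or.inr h'
  rcases this with rfl | rfl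
  · exact Or.inr ⟨d, by push_cast; ring⟩
  · exact Or.inl ⟨c, by push_cast; ring⟩

private lemma cS_not_Q33 : cS ∉ Q33 := by
  intro h
  obtain ⟨c, d, hcd⟩ := memQ33 h
  have h1 : ((c ^ 2 + 33 * d ^ 2 : ℚ) : ℂ) + ((2 * c * d : ℚ) : ℂ) * cA
      = ((30 : ℚ) : ℂ) + ((2 : ℚ) : ℂ) * cA := by
    rw [← sq_expand, ← hcd, hS]; push_cast; ring
  obtain ⟨e1, e2⟩ := ratext h1
  apply ns768 (c ^ 2 - 33 * d ^ 2)
  nlinarith [e1, e2]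

private lemma cS_sq_mem : cS ^ 2 ∈ Q33 := by
  rw [hS]
  exact add_mem (ratmem _ 30) (mul_mem (ratmem _ 2) cA_mem_Q33)

private lemma memNN {z : ℂ} (hz : z ∈ NN) : ∃ x ∈ Q33, ∃ y ∈ Q33, z = x + y * cS := by
  have hle : NN ≤ IntermediateField.adjoin ℚ (insert cS (Q33 : Set ℂ)) := by
    rw [NN, IntermediateField.adjoin_le_iff]
    rintro w (rfl | rfl)
    · exact IntermediateField.subset_adjoin ℚ _ (Set.mem_insert_of_mem _ cA_mem_Q33)
    · exact IntermediateField.subset_adjoin ℚ _ (Set.mem_insert _ _)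
  exact quad_mem Q33 cS cS_sq_mem cS_not_Q33 z (hle hz)

private lemma keyQu {q : ℂ} (hq : q ∈ Q33) (D : ℚ) (h : q ^ 2 * (30 + 2 * cA) = (D : ℂ)) :
    q = 0 := by
  obtain ⟨c, d, rfl⟩ := memQ33 hq
  have h1 : ((30 * (c ^ 2 + 33 * d ^ 2) + 132 * c * d : ℚ) : ℂ)
      + ((2 * (c ^ 2 + 33 * d ^ 2) + 60 * c * d : ℚ) : ℂ) * cA
      = (D : ℂ) + ((0 : ℚ) : ℂ) * cA := by
    push_cast
    linear_combination h - ((30 * (d:ℂ) ^ 2 + 4 * c * d) + 2 * d ^ 2 * cA) * hA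
  obtain ⟨e1, e2⟩ := ratext h1
  have hd : d = 0 := by
    by_contra hd0
    apply ns192 ((c + 15 * d) / d)
    have h192 : (c + 15 * d) ^ 2 = 192 * d ^ 2 := by nlinarith [e2]
    field_simp
    linarith [h192]
  have hc : c = 0 := by
    rw [hd] at e2
    nlinarith [e2]
  rw [hd, hc]
  norm_num

/-- classification of square roots of rationals in NN -/
private lemma keyN {φ : ℂ} (hφ : φ ∈ NN) (D : ℚ) (h : φ ^ 2 = (D : ℂ)) :
    (∃ c : ℚ, φ = (c : ℂ)) ∨ (∃ c : ℚ, φ = (c : ℂ) * cA) := by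
  obtain ⟨x, hx, y, hy, rfl⟩ := memNN hφ
  have hsq : (x ^ 2 + y ^ 2 * (30 + 2 * cA)) + (2 * x * y) * cS = ((D : ℚ) : ℂ) := by
    rw [← h]
    linear_combination - (y ^ 2) * hS
  have hmem1 : x ^ 2 + y ^ 2 * (30 + 2 * cA) ∈ Q33 :=
    add_mem (pow_mem hx 2) (mul_mem (pow_mem hy 2)
      (add_mem (ratmem _ 30) (mul_mem (ratmem _ 2) cA_mem_Q33)))
  obtain ⟨e1, e2⟩ := extract Q33 cS cS_not_Q33 hmem1
    (mul_mem (mul_mem (ratmem _ 2) hx) hy) (ratmem _ D) hsq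
  have hxy0 : x = 0 ∨ y = 0 := by
    rcases mul_eq_zero.mp e1 with h' | h'
    · rcases mul_eq_zero.mp h' with h'' | h''
      · norm_num at h''
      · exact Or.inl h''
    · exact Or.inr h'
  rcases hxy0 with rfl | rfl
  · -- φ = y * cS with y^2*(30+2A) = D, so y = 0 and φ = 0
    have hy0 : y = 0 := keyQu hy D (by linear_combination e2)
    subst hy0
    exact Or.inl ⟨0, by norm_num⟩
  · -- φ = x ∈ Q33 with x^2 = D
    have hx2 : x ^ 2 = ((D : ℚ) : ℂ) := by linear_combination e2
    rcases keyQ hx D hx2 with ⟨c, hc⟩ | ⟨c, hc⟩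
    · exact Or.inl ⟨c, by rw [← hc]; ring⟩
    · exact Or.inr ⟨c, by rw [← hc]; ring⟩

private lemma cT_not_NN : cT ∉ NN := by
  intro h
  have h3 : cT ^ 2 = ((3 : ℚ) : ℂ) := by rw [hT]; norm_num
  rcases keyN h 3 h3 with ⟨c, hc⟩ | ⟨c, hc⟩
  · apply ns3 c
    have : ((c : ℚ) : ℂ) ^ 2 = ((3 : ℚ) : ℂ) := by rw [← hc]; exact h3
    exact_mod_cast this
  · have h33 : ((33 * c ^ 2 : ℚ) : ℂ) = ((3 : ℚ) : ℂ) := by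
      push_cast
      linear_combination -(c:ℂ)^2 * hA - (cT + (c:ℂ)*cA) * hc + h3
    have h33' : 33 * c ^ 2 = 3 := by exact_mod_cast h33
    have hc0 : c ≠ 0 := by intro h'; rw [h'] at h33'; norm_num at h33'
    apply ns11 (1 / c)
    field_simp
    linarith [h33']

private lemma cT_sq_mem : cT ^ 2 ∈ NN := by rw [hT]; exact_mod_cast ratmem NN 3

private lemma cA_mem_NN : cA ∈ NN := IntermediateField.subset_adjoin ℚ _ (Or.inl rfl)
private lemma cS_mem_NN : cS ∈ NN := IntermediateField.subset_adjoin ℚ _ (Or.inr rfl)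

private lemma memKK {z : ℂ} (hz : z ∈ KK) : ∃ x ∈ NN, ∃ y ∈ NN, z = x + y * cT := by
  have hle : KK ≤ IntermediateField.adjoin ℚ (insert cT (NN : Set ℂ)) := by
    rw [KK, IntermediateField.adjoin_le_iff]
    rintro w (rfl | rfl | rfl)
    · exact IntermediateField.subset_adjoin ℚ _ (Set.mem_insert_of_mem _ cA_mem_NN)
    · exact IntermediateField.subset_adjoin ℚ _ (Set.mem_insert_of_mem _ cS_mem_NN)
    · exact IntermediateField.subset_adjoin ℚ _ (Set.mem_insert _ _)
  exact quad_mem NN cT cT_sq_mem cT_not_NN z (hle hz)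

/-- classification of square roots of rationals in KK -/
private lemma keyK {φ : ℂ} (hφ : φ ∈ KK) (D : ℚ) (h : φ ^ 2 = (D : ℂ)) :
    (∃ c : ℚ, φ = (c : ℂ)) ∨ (∃ c : ℚ, φ = (c : ℂ) * cT) ∨
    (∃ c : ℚ, φ = (c : ℂ) * cE) ∨ (∃ c : ℚ, φ = (c : ℂ) * cA) := by
  obtain ⟨x, hx, y, hy, rfl⟩ := memKK hφ
  have hsq : (x ^ 2 + 3 * y ^ 2) + (2 * x * y) * cT = ((D : ℚ) : ℂ) := by
    rw [← h]
    linear_combination - (y ^ 2) * hT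
  have hmem1 : x ^ 2 + 3 * y ^ 2 ∈ NN :=
    add_mem (pow_mem hx 2) (mul_mem (by exact_mod_cast ratmem NN 3) (pow_mem hy 2))
  obtain ⟨e1, e2⟩ := extract NN cT cT_not_NN hmem1
    (mul_mem (mul_mem (by exact_mod_cast ratmem NN 2) hx) hy) (ratmem _ D) hsq
  have hxy0 : x = 0 ∨ y = 0 := by
    rcases mul_eq_zero.mp e1 with h' | h'
    · rcases mul_eq_zero.mp h' with h'' | h''
      · norm_num at h''
      · exact Or.inl h''
    · exact Or.inr h'
  rcases hxy0 with rfl | rfl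
  · -- φ = y * cT with 3 y^2 = D
    have hy2 : y ^ 2 = ((D / 3 : ℚ) : ℂ) := by
      push_cast
      have : (3:ℂ) * y ^ 2 = (D:ℂ) := by linear_combination e2
      field_simp
      linear_combination this
    rcases keyN hy (D / 3) hy2 with ⟨c, hc⟩ | ⟨c, hc⟩
    · exact Or.inr (Or.inl ⟨c, by rw [hc]; ring⟩)
    · refine Or.inr (Or.inr (Or.inl ⟨3 * c, ?_⟩))
      rw [hc]
      push_cast
      linear_combination (c : ℂ) * hAT
  · -- φ = x with x^2 = D
    have hx2 : x ^ 2 = ((D : ℚ) : ℂ) := by linear_combination e2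
    rcases keyN hx D hx2 with ⟨c, hc⟩ | ⟨c, hc⟩
    · exact Or.inl ⟨c, by rw [← hc]; ring⟩
    · exact Or.inr (Or.inr (Or.inr ⟨c, by rw [← hc]; ring⟩))

noncomputable def r1 : ℂ := (1 + cA + cS) / 2
noncomputable def r2 : ℂ := (1 + cA - cS) / 2
noncomputable def r3 : ℂ := (1 - cA + cW) / 2
noncomputable def r4 : ℂ := (1 - cA - cW) / 2

private lemma hfact (z : ℂ) : z ^ 4 - 2 * z ^ 3 - 30 * z ^ 2 - 2 * z + 1
    = (z - r1) * (z - r2) * ((z - r3) * (z - r4)) := by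
  have e12 : (z - r1) * (z - r2) = z ^ 2 - (1 + cA) * z + 1 := by
    rw [r1, r2]
    linear_combination hA / 4 - hS / 4
  have e34 : (z - r3) * (z - r4) = z ^ 2 - (1 - cA) * z + 1 := by
    rw [r3, r4]
    linear_combination hA / 4 - hW / 4
  rw [e12, e34]
  linear_combination z ^ 2 * hA

private lemma cA_mem_KK : cA ∈ KK := IntermediateField.subset_adjoin ℚ _ (Or.inl rfl)
private lemma cS_mem_KK : cS ∈ KK := IntermediateField.subset_adjoin ℚ _ (Or.inr (Or.inl rfl))
private lemma cT_mem_KK : cT ∈ KK := IntermediateField.subset_adjoin ℚ _ (Or.inr (Or.inr rfl))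
private lemma cE_mem_KK : cE ∈ KK := by
  have h3 : ((3:ℚ):ℂ) ≠ 0 := by norm_num
  have : cE = cA * cT / ((3:ℚ):ℂ) := by
    rw [eq_div_iff h3]
    push_cast
    linear_combination -hAT
  rw [this]
  exact div_mem (mul_mem cA_mem_KK cT_mem_KK) (ratmem _ 3)

private lemma cW_mem_KK : cW ∈ KK := by
  have : cW = 16 * cT / cS := by
    rw [eq_div_iff hSpos]
    linear_combination hSW
  rw [this]
  exact div_mem (mul_mem (by exact_mod_cast ratmem KK 16) cT_mem_KK) cS_mem_KK

private lemma two_ne : ((2:ℚ):ℂ) ≠ 0 := by norm_num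

theorem K1_eq_KK (χ₁ : ℚ[X]) (hχ : χ₁ = X ^ 4 - 2 * X ^ 3 - 30 * X ^ 2 - 2 * X + 1) :
    IntermediateField.adjoin ℚ (χ₁.rootSet ℂ) = KK := by
  have haev : ∀ z : ℂ, aeval z χ₁ = z ^ 4 - 2 * z ^ 3 - 30 * z ^ 2 - 2 * z + 1 := by
    intro z
    rw [hχ]
    simp only [map_add, map_sub, map_mul, map_pow, aeval_X, map_one, map_ofNat]
  have hne : χ₁ ≠ 0 := by
    intro h
    have h0 := haev 0
    rw [h] at h0
    simp at h0
  have hroots : χ₁.rootSet ℂ = {r1, r2, r3, r4} := by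
    ext z
    rw [Polynomial.mem_rootSet]
    simp only [hne, ne_eq, not_false_eq_true, true_and, haev z, hfact z,
      mul_eq_zero, sub_eq_zero, Set.mem_insert_iff, Set.mem_singleton_iff]
    tauto
  rw [hroots]
  apply le_antisymm
  · rw [IntermediateField.adjoin_le_iff]
    have h2 : ((2:ℚ):ℂ) ∈ KK := ratmem _ 2
    have key : ∀ x y : ℂ, x ∈ KK → y ∈ KK → (1 + x + y) / 2 ∈ KK := by
      intro x y hx hy
      have : (1 + x + y) / 2 = (1 + x + y) / ((2:ℚ):ℂ) := by norm_num
      rw [this]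
      exact div_mem (add_mem (add_mem KK.one_mem hx) hy) h2
    rintro w (rfl | rfl | rfl | rfl)
    · exact key _ _ cA_mem_KK cS_mem_KK
    · have : r2 = (1 + cA + (-cS)) / 2 := by rw [r2]; ring
      rw [this]; exact key _ _ cA_mem_KK (neg_mem cS_mem_KK)
    · have : r3 = (1 + (-cA) + cW) / 2 := by rw [r3]; ring
      rw [this]; exact key _ _ (neg_mem cA_mem_KK) cW_mem_KK
    · have : r4 = (1 + (-cA) + (-cW)) / 2 := by rw [r4]; ring
      rw [this]; exact key _ _ (neg_mem cA_mem_KK) (neg_mem cW_mem_KK)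
  · rw [KK, IntermediateField.adjoin_le_iff]
    set R := IntermediateField.adjoin ℚ ({r1, r2, r3, r4} : Set ℂ) with hR
    have m1 : r1 ∈ R := IntermediateField.subset_adjoin ℚ _ (by simp)
    have m2 : r2 ∈ R := IntermediateField.subset_adjoin ℚ _ (by simp)
    have m3 : r3 ∈ R := IntermediateField.subset_adjoin ℚ _ (by simp)
    have m4 : r4 ∈ R := IntermediateField.subset_adjoin ℚ _ (by simp)
    have hcA : cA ∈ R := by
      have : cA = r1 + r2 - 1 := by rw [r1, r2]; ring
      rw [this]; exact sub_mem (add_mem m1 m2) R.one_mem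
    have hcS : cS ∈ R := by
      have : cS = r1 - r2 := by rw [r1, r2]; ring
      rw [this]; exact sub_mem m1 m2
    have hcW : cW ∈ R := by
      have : cW = r3 - r4 := by rw [r3, r4]; ring
      rw [this]; exact sub_mem m3 m4
    have hcT : cT ∈ R := by
      have h16 : ((16:ℚ):ℂ) ≠ 0 := by norm_num
      have : cT = cS * cW / ((16:ℚ):ℂ) := by
        rw [eq_div_iff h16]
        push_cast
        linear_combination -hSW
      rw [this]
      exact div_mem (mul_mem hcS hcW) (ratmem _ 16)
    rintro w (rfl | rfl | rfl)
    exacts [hcA, hcS, hcT]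

private lemma finrank_sqrt (x : ℂ) (n : ℚ) (hx : x ^ 2 = (n : ℂ))
    (hn : ∀ q : ℚ, q ^ 2 ≠ n) :
    Module.finrank ℚ (IntermediateField.adjoin ℚ {x}) = 2 := by
  have hirr : Irreducible (X ^ 2 - C n : ℚ[X]) :=
    X_pow_sub_C_irreducible_of_prime Nat.prime_two hn
  have hmo : (X ^ 2 - C n : ℚ[X]).Monic := monic_X_pow_sub_C n (by norm_num)
  have hev : aeval x (X ^ 2 - C n : ℚ[X]) = 0 := by
    rw [map_sub, map_pow, aeval_X, aeval_C, hx, eq_ratCast, sub_self]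
  have hint : IsIntegral ℚ x := ⟨X ^ 2 - C n, hmo, by rwa [← Polynomial.aeval_def]⟩
  have h1 := IntermediateField.adjoin.finrank hint
  rw [← minpoly.eq_of_irreducible_of_monic hirr hev hmo, natDegree_X_pow_sub_C] at h1
  exact h1

private lemma gen_case (F : IntermediateField ℚ ℂ) [FiniteDimensional ℚ F]
    (hrank : Module.finrank ℚ F = 2) (x : ℂ) (n : ℚ) (hx : x ^ 2 = (n : ℂ))
    (hn : ∀ q : ℚ, q ^ 2 ≠ n) (φ : ℂ) (hφF : φ ∈ F)
    (hφb : φ ∉ (⊥ : IntermediateField ℚ ℂ)) (c : ℚ) (hc : φ = (c : ℂ) * x) :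
    F = IntermediateField.adjoin ℚ {x} := by
  have hc0 : c ≠ 0 := by
    rintro rfl
    apply hφb
    rw [hc]
    simpa using zero_mem (⊥ : IntermediateField ℚ ℂ)
  have hxF : x ∈ F := by
    have hcc : ((c : ℚ) : ℂ) ≠ 0 := by exact_mod_cast hc0
    have : x = φ * ((c⁻¹ : ℚ) : ℂ) := by
      rw [hc]; push_cast; field_simp
    rw [this]
    exact mul_mem hφF (ratmem F c⁻¹)
  have hle : IntermediateField.adjoin ℚ {x} ≤ F :=
    IntermediateField.adjoin_le_iff.mpr (Set.singleton_subset_iff.mpr hxF)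
  exact (IntermediateField.eq_of_le_of_finrank_eq hle
    (by rw [finrank_sqrt x n hx hn, hrank])).symm

theorem stmt_9 (χ₁ : ℚ[X]) (hχ : χ₁ = X ^ 4 - 2 * X ^ 3 - 30 * X ^ 2 - 2 * X + 1)
    (K₁ : IntermediateField ℚ ℂ) (hK : K₁ = IntermediateField.adjoin ℚ (χ₁.rootSet ℂ)) :
    ∀ F : IntermediateField ℚ ℂ,
      (F ≤ K₁ ∧ Module.finrank ℚ F = 2) ↔
        (F = IntermediateField.adjoin ℚ {((Real.sqrt 3 : ℝ) : ℂ)} ∨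
         F = IntermediateField.adjoin ℚ {((Real.sqrt 11 : ℝ) : ℂ)} ∨
         F = IntermediateField.adjoin ℚ {((Real.sqrt 33 : ℝ) : ℂ)}) := by
  intro F
  have hKeq : K₁ = KK := by rw [hK]; exact K1_eq_KK χ₁ hχ
  constructor
  · rintro ⟨hle, hrank⟩
    rw [hKeq] at hle
    haveI : FiniteDimensional ℚ F :=
      FiniteDimensional.of_finrank_pos (by rw [hrank]; norm_num)
    have hFbot : ¬F ≤ ⊥ := by
      intro h
      have hb : F = ⊥ := le_bot_iff.mp h
      rw [hb, IntermediateField.finrank_bot] at hrank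
      norm_num at hrank
    obtain ⟨θ, hθF, hθb⟩ := SetLike.not_le_iff_exists.mp hFbot
    set θF : F := ⟨θ, hθF⟩ with hθFdef
    have hdep : ¬LinearIndependent ℚ ![(1 : F), θF, θF ^ 2] := by
      intro h
      have h3 := h.fintype_card_le_finrank
      rw [hrank] at h3
      simp at h3
    obtain ⟨g, hg, i, hgi⟩ := Fintype.not_linearIndependent_iff.mp hdep
    rw [Fin.sum_univ_three] at hg
    simp only [Matrix.cons_val_zero, Matrix.cons_val_one, Matrix.head_cons,
      Matrix.cons_val_two, Matrix.tail_cons] at hg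
    have hgC : (g 0 : ℂ) + (g 1 : ℂ) * θ + (g 2 : ℂ) * θ ^ 2 = 0 := by
      have h' := congrArg (Subtype.val) hg
      push_cast at h'
      rw [Algebra.smul_def, Algebra.smul_def, Algebra.smul_def] at h'
      simpa [eq_ratCast, hθFdef, mul_comm] using h'
    by_cases h2 : g 2 = 0
    · exfalso
      rw [h2] at hgC
      push_cast at hgC
      by_cases h1 : g 1 = 0
      · rw [h1] at hgC
        push_cast at hgC
        have h0 : (g 0 : ℂ) = 0 := by linear_combination hgC
        have h0' : g 0 = 0 := by exact_mod_cast h0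
        fin_cases i <;> simp_all
      · apply hθb
        rw [IntermediateField.mem_bot]
        refine ⟨-g 0 / g 1, ?_⟩
        rw [eq_ratCast]
        have hg1 : (g 1 : ℂ) ≠ 0 := by exact_mod_cast h1
        push_cast
        rw [div_eq_iff hg1]
        linear_combination -hgC
    have hg2 : (g 2 : ℂ) ≠ 0 := by exact_mod_cast h2
    set a : ℚ := g 1 / g 2 with ha
    set b : ℚ := g 0 / g 2 with hb
    set D : ℚ := a ^ 2 - 4 * b with hD
    set φ : ℂ := 2 * θ + (a : ℂ) with hφ
    have hφ2 : φ ^ 2 = (D : ℂ) := by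
      rw [hφ, hD, ha, hb]
      push_cast
      field_simp
      linear_combination (4 * (g 2 : ℂ)) * hgC
    have hφK : φ ∈ KK := by
      rw [hφ]
      exact add_mem (mul_mem (by exact_mod_cast ratmem KK 2) (hle hθF)) (ratmem _ a)
    have hφF : φ ∈ F := by
      rw [hφ]
      exact add_mem (mul_mem (by exact_mod_cast ratmem F 2) hθF) (ratmem _ a)
    have hφb : φ ∉ (⊥ : IntermediateField ℚ ℂ) := by
      intro hbm
      apply hθb
      have hθeq : θ = (φ - (a : ℂ)) * (((2 : ℚ) : ℂ))⁻¹ := by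
        rw [hφ]
        push_cast
        rw [eq_mul_inv_iff_mul_eq₀ (by norm_num : (2:ℂ) ≠ 0)]
        ring
      rw [hθeq]
      exact mul_mem (sub_mem hbm (ratmem _ a)) (inv_mem (ratmem _ 2))
    rcases keyK hφK D hφ2 with ⟨c, hc⟩ | ⟨c, hc⟩ | ⟨c, hc⟩ | ⟨c, hc⟩
    · exfalso
      apply hφb
      rw [IntermediateField.mem_bot]
      refine ⟨c, ?_⟩
      rw [eq_ratCast]
      exact hc.symm
    · exact Or.inl (gen_case F hrank cT 3 (by push_cast; exact hT) ns3 φ hφF hφb c hc)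
    · exact Or.inr (Or.inl (gen_case F hrank cE 11 (by push_cast; exact hE) ns11 φ hφF hφb c hc))
    · exact Or.inr (Or.inr (gen_case F hrank cA 33 (by push_cast; exact hA) ns33 φ hφF hφb c hc))
  · rintro (rfl | rfl | rfl)
    · constructor
      · rw [hKeq]
        exact IntermediateField.adjoin_le_iff.mpr (Set.singleton_subset_iff.mpr cT_mem_KK)
      · exact finrank_sqrt cT 3 (by push_cast; exact hT) ns3
    · constructor
      · rw [hKeq]
        exact IntermediateField.adjoin_le_iff.mpr (Set.singleton_subset_iff.mpr cE_mem_KK)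
      · exact finrank_sqrt cE 11 (by push_cast; exact hE) ns11
    · constructor
      · rw [hKeq]
        exact IntermediateField.adjoin_le_iff.mpr (Set.singleton_subset_iff.mpr cA_mem_KK)
      · exact finrank_sqrt cA 33 (by push_cast; exact hA) ns33

end
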